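/- Let H be a complex Hilbert space, let D and E be bounded selfadjoint operators on H, let P be a bounded operator on H, let r > 0 and a > 0. Suppose cos(tD) ∘ P = cos(tE) ∘ P for all t ∈ [0, r], and that the spectrum of E is contained in {λ ∈ ℝ : a ≤ |λ|}. Then for every even Schwartz function f : ℝ → ℂ whose Fourier transform f̂ is supported in [-r, r], one has ‖f(D) ∘ P‖ ≤ ‖P‖ · sup{|f(λ)| : λ ∈ ℝ, a ≤ |λ|}. -/

import Mathlib

open MeasureTheory

/-- The Fourier transform with the normalization `f̂(t) = ∫ f(x) e^{-itx} dx`. -/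
noncomputable def fourierHat (f : ℝ → ℂ) (t : ℝ) : ℂ :=
  ∫ x : ℝ, f x * Complex.exp (-(Complex.I * t * x))

/-- Continuous functional calculus of a (selfadjoint) bounded operator `D`
applied to a function `f : ℝ → ℂ`.  Since the spectrum of a selfadjoint
operator is real, we implement it via the `ℂ`-valued continuous functional
calculus applied to `z ↦ f (Re z)`. -/
noncomputable def fc {H : Type*} [NormedAddCommGroup H] [InnerProductSpace ℂ H]
    [CompleteSpace H] (f : ℝ → ℂ) (D : H →L[ℂ] H) : H →L[ℂ] H :=
  cfc (fun z : ℂ => f z.re) D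

section Statement4Aux

open FourierTransform Real RealInnerProductSpace


lemma fourierHat_eq (f : SchwartzMap ℝ ℂ) (t : ℝ) :
    fourierHat (fun y => f y) t = 𝓕 (⇑f) (t / (2 * Real.pi)) := by
  rw [Real.fourier_eq']
  unfold fourierHat
  congr 1
  funext v
  rw [smul_eq_mul, mul_comm]
  congr 2
  simp only [RCLike.inner_apply, starRingEnd_apply, star_trivial]
  have h : -2 * Real.pi * (t / (2 * Real.pi) * v) = -(t * v) := by
    field_simp
  rw [h]
  push_cast
  ring

lemma fourierHat_cont (f : SchwartzMap ℝ ℂ) : Continuous (fourierHat fun y => f y) := by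
  have : (fourierHat fun y => f y) = fun t => 𝓕 (⇑f) (t / (2 * Real.pi)) :=
    funext (fourierHat_eq f)
  rw [this, ← SchwartzMap.fourier_coe, ← SchwartzMap.fourierTransformCLM_apply ℂ f]
  exact (SchwartzMap.fourierTransformCLM ℂ f).continuous.comp (by fun_prop)

lemma fourierHat_even (f : SchwartzMap ℝ ℂ) (hf_even : ∀ x : ℝ, f (-x) = f x) (t : ℝ) :
    fourierHat (fun y => f y) (-t) = fourierHat (fun y => f y) t := by
  unfold fourierHat
  calc (∫ x : ℝ, f x * Complex.exp (-(Complex.I * (-t : ℝ) * x)))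
      = ∫ x : ℝ, (fun y : ℝ => f y * Complex.exp (Complex.I * t * y)) x := by
        congr 1; funext x; push_cast; ring_nf
    _ = ∫ x : ℝ, (fun y : ℝ => f y * Complex.exp (Complex.I * t * y)) (-x) :=
        (integral_neg_eq_self _ _).symm
    _ = ∫ x : ℝ, f x * Complex.exp (-(Complex.I * t * x)) := by
        congr 1; funext x
        simp only [hf_even]
        push_cast; ring_nf

lemma key_inversion (r : ℝ) (f : SchwartzMap ℝ ℂ) (hf_even : ∀ x : ℝ, f (-x) = f x)
    (hf_supp : Function.support (fourierHat fun x => f x) ⊆ Set.Icc (-r) r) (x : ℝ) :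
    (f x : ℂ) = (2 * Real.pi : ℝ)⁻¹ •
      ∫ t : ℝ, fourierHat (fun y => f y) t * Complex.cos ((t : ℂ) * (x : ℂ)) := by
  set g := fourierHat fun y => f y with hg
  have hg_cont : Continuous g := fourierHat_cont f
  have hg_cs : HasCompactSupport g :=
    HasCompactSupport.intro isCompact_Icc fun t ht => by
      by_contra h
      exact ht (hf_supp h)
  have hF2 : ⇑(SchwartzMap.fourierTransformCLM ℂ f) = 𝓕 ⇑f := by
    rw [SchwartzMap.fourierTransformCLM_apply ℂ f, SchwartzMap.fourier_coe]
  have h𝓕int : Integrable (𝓕 ⇑f) := hF2 ▸ (SchwartzMap.fourierTransformCLM ℂ f).integrable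
  have hinv : 𝓕⁻ (𝓕 ⇑f) = ⇑f := f.continuous.fourierInv_fourier_eq f.integrable h𝓕int
  have hgv : ∀ v : ℝ, 𝓕 (⇑f) v = g (2 * Real.pi * v) := by
    intro v
    rw [hg, fourierHat_eq f]
    congr 1
    field_simp
  have h2π : (0:ℝ) < 2 * Real.pi := by positivity
  have step1 : (f x : ℂ) = (2 * Real.pi : ℝ)⁻¹ •
      ∫ t : ℝ, Complex.exp ((t * x : ℝ) * Complex.I) * g t := by
    conv_lhs => rw [← hinv]
    rw [Real.fourierInv_eq']
    have : (fun v : ℝ => Complex.exp (((2 * Real.pi * (inner ℝ v x : ℝ) : ℝ)) * Complex.I) • 𝓕 (⇑f) v)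
        = fun v : ℝ => (fun t : ℝ => Complex.exp ((t * x : ℝ) * Complex.I) * g t)
            (2 * Real.pi * v) := by
      funext v
      simp only [RCLike.inner_apply, starRingEnd_apply, star_trivial, smul_eq_mul, hgv v]
      congr 2
      push_cast
      ring
    rw [this, Measure.integral_comp_mul_left
        (fun t : ℝ => Complex.exp ((t * x : ℝ) * Complex.I) * g t) (2 * Real.pi),
      abs_of_pos (inv_pos.mpr h2π)]
  rw [step1]
  congr 1
  have hc1 : Continuous fun t : ℝ => g t * Complex.cos ((t : ℂ) * (x : ℂ)) := by
    fun_prop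
  have hc2 : Continuous fun t : ℝ => g t * Complex.sin ((t : ℂ) * (x : ℂ)) * Complex.I := by
    fun_prop
  have hcs1 : HasCompactSupport fun t : ℝ => g t * Complex.cos ((t : ℂ) * (x : ℂ)) :=
    HasCompactSupport.intro isCompact_Icc fun t ht => by
      have : g t = 0 := by
        by_contra h; exact ht (hf_supp h)
      simp [this]
  have hcs2 : HasCompactSupport fun t : ℝ => g t * Complex.sin ((t : ℂ) * (x : ℂ)) * Complex.I :=
    HasCompactSupport.intro isCompact_Icc fun t ht => by
      have : g t = 0 := by
        by_contra h; exact ht (hf_supp h)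
      simp [this]
  have h1 : Integrable fun t : ℝ => g t * Complex.cos ((t : ℂ) * (x : ℂ)) :=
    hc1.integrable_of_hasCompactSupport hcs1
  have h2 : Integrable fun t : ℝ => g t * Complex.sin ((t : ℂ) * (x : ℂ)) * Complex.I :=
    hc2.integrable_of_hasCompactSupport hcs2
  have hodd : (∫ t : ℝ, g t * Complex.sin ((t : ℂ) * (x : ℂ)) * Complex.I) = 0 := by
    have h := integral_neg_eq_self
      (fun t : ℝ => g t * Complex.sin ((t : ℂ) * (x : ℂ)) * Complex.I) volume
    have h' : (fun t : ℝ => g (-t) * Complex.sin (((-t : ℝ) : ℂ) * (x : ℂ)) * Complex.I)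
        = fun t : ℝ => -(g t * Complex.sin ((t : ℂ) * (x : ℂ)) * Complex.I) := by
      funext t
      rw [show g (-t) = g t from fourierHat_even f hf_even t]
      push_cast
      rw [neg_mul, Complex.sin_neg]
      ring
    rw [h', integral_neg] at h
    have h2' : (2 : ℂ) * ∫ t : ℝ, g t * Complex.sin ((t : ℂ) * (x : ℂ)) * Complex.I = 0 := by
      linear_combination -h
    exact (mul_eq_zero.mp h2').resolve_left two_ne_zero
  calc (∫ t : ℝ, Complex.exp ((t * x : ℝ) * Complex.I) * g t)
      = ∫ t : ℝ, (g t * Complex.cos ((t : ℂ) * (x : ℂ))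
          + g t * Complex.sin ((t : ℂ) * (x : ℂ)) * Complex.I) := by
        congr 1; funext t
        rw [Complex.exp_mul_I]
        push_cast
        ring
    _ = (∫ t : ℝ, g t * Complex.cos ((t : ℂ) * (x : ℂ)))
          + ∫ t : ℝ, g t * Complex.sin ((t : ℂ) * (x : ℂ)) * Complex.I :=
        integral_add h1 h2
    _ = ∫ t : ℝ, g t * Complex.cos ((t : ℂ) * (x : ℂ)) := by rw [hodd, add_zero]

lemma rep {H : Type*} [NormedAddCommGroup H] [InnerProductSpace ℂ H] [CompleteSpace H]
    (B : H →L[ℂ] H) (hB : IsSelfAdjoint B) (r : ℝ) (f : SchwartzMap ℝ ℂ)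
    (hf_even : ∀ x : ℝ, f (-x) = f x)
    (hf_supp : Function.support (fourierHat fun x => f x) ⊆ Set.Icc (-r) r) :
    Integrable (fun t : ℝ =>
      fourierHat (fun x => f x) t • fc (fun x : ℝ => Complex.cos ((t : ℂ) * x)) B) ∧
    fc (fun x => f x) B = (2 * Real.pi : ℝ)⁻¹ • ∫ t : ℝ,
      fourierHat (fun x => f x) t • fc (fun x : ℝ => Complex.cos ((t : ℂ) * x)) B := by
  haveI hB' : IsStarNormal B := hB.isStarNormal
  set g := fourierHat fun x => f x with hg
  have hg_cont : Continuous g := fourierHat_cont f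
  set σ := spectrum ℂ B with hσ
  -- the joint map
  have hjoint : Continuous (fun p : ℝ × σ =>
      g p.1 * Complex.cos ((p.1 : ℂ) * (((p.2 : ℂ).re : ℝ) : ℂ))) := by
    fun_prop
  set G : C(ℝ, C(σ, ℂ)) := (ContinuousMap.mk _ hjoint).curry with hG
  have hGzero : ∀ t : ℝ, t ∉ Set.Icc (-r) r → G t = 0 := by
    intro t ht
    ext z
    have hgt : g t = 0 := by
      by_contra h; exact ht (hf_supp h)
    show g t * _ = 0
    simp [hgt]
  have hG_int : Integrable (fun t => G t) :=
    G.continuous.integrable_of_hasCompactSupport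
      (HasCompactSupport.intro isCompact_Icc hGzero)
  -- the CLM version of cfcHom
  let φ := cfcHom (R := ℂ) (A := H →L[ℂ] H) hB'
  let Φ : C(σ, ℂ) →L[ℂ] (H →L[ℂ] H) :=
    { toLinearMap := φ.toAlgHom.toLinearMap, cont := cfcHom_continuous hB' }
  have hΦ : ∀ ψ : C(σ, ℂ), Φ ψ = φ ψ := fun _ => rfl
  -- Φ of G t
  have hcosCont : ∀ t : ℝ, ContinuousOn (fun z : ℂ => Complex.cos ((t : ℂ) * (z.re : ℂ))) σ := by
    intro t
    apply Continuous.continuousOn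
    fun_prop
  have hΦG : ∀ t : ℝ, Φ (G t) = g t • fc (fun x : ℝ => Complex.cos ((t : ℂ) * x)) B := by
    intro t
    have hGt : G t = g t • ContinuousMap.mk (σ.domRestrict (fun z : ℂ =>
        Complex.cos ((t : ℂ) * (z.re : ℂ)))) ((hcosCont t).restrict) := by
      ext z
      show g t * _ = _
      simp
    rw [hGt, Φ.map_smul_of_tower, hΦ]
    congr 1
    rw [show fc (fun x : ℝ => Complex.cos ((t : ℂ) * x)) B
        = cfc (fun z : ℂ => Complex.cos ((t : ℂ) * (z.re : ℂ))) B from rfl,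
      cfc_apply _ B hB' (hcosCont t)]
  -- f ∘ re as a continuous map on σ
  have hfCont : ContinuousOn (fun z : ℂ => (f z.re : ℂ)) σ := by
    apply Continuous.continuousOn
    fun_prop
  have hmean : ContinuousMap.mk (σ.domRestrict (fun z : ℂ => (f z.re : ℂ))) hfCont.restrict
      = (2 * Real.pi : ℝ)⁻¹ • ∫ t : ℝ, G t := by
    ext z
    rw [ContinuousMap.smul_apply, ContinuousMap.integral_apply hG_int z]
    exact key_inversion r f hf_even hf_supp (z : ℂ).re
  have hrep : fc (fun x => f x) B = (2 * Real.pi : ℝ)⁻¹ • ∫ t : ℝ, Φ (G t) := by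
    rw [show fc (fun x => f x) B = cfc (fun z : ℂ => (f z.re : ℂ)) B from rfl,
      cfc_apply _ B hB' hfCont, ← hΦ, hmean, Φ.map_smul_of_tower,
      ContinuousLinearMap.integral_comp_comm Φ hG_int]
  constructor
  · exact (Φ.integrable_comp hG_int).congr (Filter.Eventually.of_forall fun t => (hΦG t))
  · rw [hrep]
    congr 1
    exact integral_congr_ae (Filter.Eventually.of_forall fun t => hΦG t)

end Statement4Aux

/-- if `cos(tD) P = cos(tE) P` for all `t ∈ [0, r]` and the
spectrum of `E` lies in `{λ : a ≤ |λ|}`, then for every even Schwartz function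
`f` with `f̂` supported in `[-r, r]`,
`‖f(D) P‖ ≤ ‖P‖ · sup {|f(λ)| : a ≤ |λ|}`. -/
theorem statement4 {H : Type*} [NormedAddCommGroup H] [InnerProductSpace ℂ H]
    [CompleteSpace H] (D E P : H →L[ℂ] H)
    (hD : IsSelfAdjoint D) (hE : IsSelfAdjoint E) (r a : ℝ) (hr : 0 < r) (ha : 0 < a)
    (hcos : ∀ t ∈ Set.Icc (0 : ℝ) r,
      fc (fun x : ℝ => Complex.cos ((t : ℂ) * x)) D ∘L P =
        fc (fun x : ℝ => Complex.cos ((t : ℂ) * x)) E ∘L P)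
    (hspec : spectrum ℝ E ⊆ {lam : ℝ | a ≤ |lam|})
    (f : SchwartzMap ℝ ℂ) (hf_even : ∀ x : ℝ, f (-x) = f x)
    (hf_supp : Function.support (fourierHat fun x => f x) ⊆ Set.Icc (-r) r) :
    ‖fc (fun x => f x) D ∘L P‖ ≤ ‖P‖ * ⨆ lam : {x : ℝ // a ≤ |x|}, ‖f (lam : ℝ)‖ := by
  haveI hE' : IsStarNormal E := hE.isStarNormal
  set g := fourierHat fun x => f x with hg
  obtain ⟨hintD, hrepD⟩ := rep D hD r f hf_even hf_supp
  obtain ⟨hintE, hrepE⟩ := rep E hE r f hf_even hf_supp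
  -- right-composition with P as a CLM
  let R : (H →L[ℂ] H) →L[ℂ] (H →L[ℂ] H) := (ContinuousLinearMap.compL ℂ H H H).flip P
  have hR : ∀ T : H →L[ℂ] H, R T = T ∘L P := fun _ => rfl
  -- integrands agree
  have hint_eq : ∀ t : ℝ,
      g t • (fc (fun x : ℝ => Complex.cos ((t : ℂ) * x)) D ∘L P)
        = g t • (fc (fun x : ℝ => Complex.cos ((t : ℂ) * x)) E ∘L P) := by
    intro t
    by_cases hgt : g t = 0
    · simp [hgt]
    · have htr : t ∈ Set.Icc (-r) r := hf_supp hgt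
      rcases le_or_gt 0 t with h0 | h0
      · rw [hcos t ⟨h0, htr.2⟩]
      · have hfun : (fun x : ℝ => Complex.cos ((t : ℂ) * x))
            = fun x : ℝ => Complex.cos (((-t : ℝ) : ℂ) * x) := by
          funext x
          push_cast
          rw [neg_mul, Complex.cos_neg]
        rw [hfun, hcos (-t) ⟨by linarith, by linarith [htr.1]⟩]
  have hDE : fc (fun x => f x) D ∘L P = fc (fun x => f x) E ∘L P := by
    rw [← hR, ← hR, hrepD, hrepE, R.map_smul_of_tower, R.map_smul_of_tower,
      ← ContinuousLinearMap.integral_comp_comm R hintD,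
      ← ContinuousLinearMap.integral_comp_comm R hintE]
    congr 1
    apply integral_congr_ae
    filter_upwards with t
    rw [R.map_smul, R.map_smul, hR, hR, hint_eq t]
  rw [hDE]
  -- norm bound
  set c := ⨆ lam : {x : ℝ // a ≤ |x|}, ‖f (lam : ℝ)‖ with hc
  have hbdd : BddAbove (Set.range fun lam : {x : ℝ // a ≤ |x|} => ‖f (lam : ℝ)‖) := by
    obtain ⟨C, hC⟩ := f.decay 0 0
    refine ⟨C, ?_⟩
    rintro - ⟨lam, rfl⟩
    have := hC.2 (lam : ℝ)
    simpa [norm_iteratedFDeriv_zero] using this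
  have hc0 : 0 ≤ c := Real.iSup_nonneg fun _ => norm_nonneg _
  have hnorm : ‖fc (fun x => f x) E‖ ≤ c := by
    apply norm_cfc_le hc0
    intro z hz
    have hre : z.re ∈ spectrum ℝ E := hE.spectrumRestricts.apply_mem hz
    have haz : a ≤ |z.re| := hspec hre
    exact le_ciSup hbdd ⟨z.re, haz⟩
  calc ‖fc (fun x => f x) E ∘L P‖ ≤ ‖fc (fun x => f x) E‖ * ‖P‖ :=
        ContinuousLinearMap.opNorm_comp_le _ _
    _ ≤ c * ‖P‖ := mul_le_mul_of_nonneg_right hnorm (norm_nonneg _)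
    _ = ‖P‖ * c := mul_comm _ _
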